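/- Let G be a group acting properly cocompactly by isometries on a geodesic hyperbolic space, satisfying the small centralizers hypothesis (G non-elementary and every elementary subgroup cyclic). If h is a hyperbolic element of G, then h is not conjugate to h⁻¹ in G. -/

import Mathlib

open Filter Pointwise

/-- `X` is `δ`-hyperbolic in the sense of Gromov (four-point condition). -/
def GromovHyperbolic (X : Type*) [MetricSpace X] (δ : ℝ) : Prop :=
  ∀ x y z w : X,
    dist x z + dist y w ≤ max (dist x y + dist z w) (dist x w + dist y z) + 2 * δ

/-- `γ` is a geodesic from `x` to `y`, parametrized by arclength on `[0, dist x y]`. -/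
def IsGeodesicFromTo {X : Type*} [MetricSpace X] (γ : ℝ → X) (x y : X) : Prop :=
  γ 0 = x ∧ γ (dist x y) = y ∧
    ∀ s ∈ Set.Icc (0 : ℝ) (dist x y), ∀ t ∈ Set.Icc (0 : ℝ) (dist x y),
      dist (γ s) (γ t) = |s - t|

/-- `X` is a geodesic space. -/
def GeodesicSpace (X : Type*) [MetricSpace X] : Prop :=
  ∀ x y : X, ∃ γ : ℝ → X, IsGeodesicFromTo γ x y

/-- A group is virtually cyclic (the notion of an elementary subgroup of a hyperbolic
group) if it has a cyclic subgroup of finite index. -/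
def IsVirtuallyCyclic (E : Type*) [Group E] : Prop :=
  ∃ C : Subgroup E, IsCyclic C ∧ C.FiniteIndex

namespace StmtAux

variable {X : Type*} [MetricSpace X]

noncomputable def gp (w y z : X) : ℝ := (dist y w + dist z w - dist y z) / 2

lemma gp_nonneg (w y z : X) : 0 ≤ gp w y z := by
  have h := dist_triangle y w z
  unfold gp; rw [dist_comm w z] at h; linarith

lemma gp_le_left (w y z : X) : gp w y z ≤ dist y w := by
  have h := dist_triangle z y w
  unfold gp; rw [dist_comm z y] at h; linarith

lemma gp_le_right (w y z : X) : gp w y z ≤ dist z w := by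
  have h := dist_triangle y z w
  unfold gp; linarith

lemma gp_comm (w y z : X) : gp w y z = gp w z y := by
  unfold gp; rw [dist_comm y z]; ring

variable {δ : ℝ}

lemma gp_min (hhyp : GromovHyperbolic X δ) (w y z u : X) :
    min (gp w y u) (gp w u z) ≤ gp w y z + δ := by
  have H := hhyp y u z w
  unfold gp
  rcases le_total (dist y u + dist z w) (dist y w + dist u z) with hc | hc
  · rw [max_eq_right hc] at H
    apply min_le_of_right_le; linarith
  · rw [max_eq_left hc] at H
    apply min_le_of_left_le; linarith

section Geodesic

variable {γ : ℝ → X} {x y : X}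

lemma geo_dist_left (hγ : IsGeodesicFromTo γ x y) {t : ℝ}
    (ht : t ∈ Set.Icc (0:ℝ) (dist x y)) : dist (γ t) x = t := by
  have h := hγ.2.2 t ht 0 ⟨le_refl 0, dist_nonneg⟩
  rw [hγ.1] at h
  rw [h, sub_zero, abs_of_nonneg ht.1]

lemma geo_dist_right (hγ : IsGeodesicFromTo γ x y) {t : ℝ}
    (ht : t ∈ Set.Icc (0:ℝ) (dist x y)) : dist (γ t) y = dist x y - t := by
  have h := hγ.2.2 t ht (dist x y) ⟨dist_nonneg, le_refl _⟩
  rw [hγ.2.1] at h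
  rw [h, abs_of_nonpos (by linarith [ht.2]), neg_sub]

lemma gp_on_geo (hγ : IsGeodesicFromTo γ x y) {t : ℝ}
    (ht : t ∈ Set.Icc (0:ℝ) (dist x y)) : gp (γ t) x y = 0 := by
  have h1 := geo_dist_left hγ ht
  have h2 := geo_dist_right hγ ht
  unfold gp
  rw [dist_comm x (γ t), dist_comm y (γ t), h1, h2]; ring

/-- `gp x w y` is in the geodesic parameter range. -/
lemma gp_mem_Icc (x w y : X) : gp x w y ∈ Set.Icc (0:ℝ) (dist x y) := by
  refine ⟨gp_nonneg _ _ _, ?_⟩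
  have := gp_le_right x w y
  rwa [dist_comm y x] at this

/-- Any point is `(gp w x y) + 2δ`-close to a point on any geodesic from `x` to `y`. -/
lemma near_geodesic (hhyp : GromovHyperbolic X δ) (hγ : IsGeodesicFromTo γ x y) (w : X) :
    dist w (γ (gp x w y)) ≤ gp w x y + 2 * δ := by
  set t₀ := gp x w y with ht₀
  have htIcc : t₀ ∈ Set.Icc (0:ℝ) (dist x y) := gp_mem_Icc x w y
  have hu1 : dist (γ t₀) x = t₀ := geo_dist_left hγ htIcc
  have hu2 : dist (γ t₀) y = dist x y - t₀ := geo_dist_right hγ htIcc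
  have hyu : gp x y (γ t₀) = t₀ := by
    have e0 : dist y x = dist x y := dist_comm y x
    have e1 : dist y (γ t₀) = dist x y - t₀ := by rw [dist_comm]; exact hu2
    unfold gp
    rw [e0, hu1, e1]; ring
  have hmin := gp_min hhyp x w (γ t₀) y
  rw [← ht₀, hyu, min_self] at hmin
  have c1 : dist x w = dist w x := dist_comm x w
  have c2 : dist y x = dist x y := dist_comm y x
  have c3 : dist y w = dist w y := dist_comm y w
  unfold gp at hmin ht₀ ⊢
  linarith [hu1, hmin, ht₀]

end Geodesic

end StmtAux

namespace StmtAux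

variable {X : Type*} [MetricSpace X] {δ : ℝ}

lemma dyadic (hhyp : GromovHyperbolic X δ) (hgeo : GeodesicSpace X) (hδ : 0 ≤ δ)
    {G : ℝ} (hG : 0 ≤ G) :
    ∀ n : ℕ, ∀ q : ℕ → X, (∀ i < n, dist (q i) (q (i+1)) ≤ G) →
    ∀ γ : ℝ → X, IsGeodesicFromTo γ (q 0) (q n) →
    ∀ t ∈ Set.Icc (0:ℝ) (dist (q 0) (q n)),
    ∃ i ≤ n, dist (γ t) (q i) ≤ 3 * δ * (Nat.clog 2 n) + G := by
  intro n
  induction n using Nat.strong_induction_on with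
  | _ n IH =>
    intro q hq γ hγ t ht
    rcases Nat.lt_or_ge n 2 with h2 | h2
    · interval_cases n
      · -- n = 0
        refine ⟨0, le_refl _, ?_⟩
        have h0 : t = 0 := by
          have := ht.2
          rw [dist_self] at this
          linarith [ht.1]
        rw [h0, hγ.1]
        rw [dist_self]
        positivity
      · -- n = 1
        refine ⟨0, Nat.zero_le _, ?_⟩
        have h1 : dist (γ t) (q 0) = t := geo_dist_left hγ ht
        have h2 : t ≤ dist (q 0) (q 1) := ht.2
        have h3 : dist (q 0) (q 1) ≤ G := hq 0 (by norm_num)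
        have h4 : (0:ℝ) ≤ 3 * δ * (Nat.clog 2 1) := by positivity
        linarith
    · -- n ≥ 2
      set mid := (n + 1) / 2 with hmid
      have hmidlt : mid < n := by omega
      have hmidge : 1 ≤ mid := by omega
      have hclog : Nat.clog 2 n = Nat.clog 2 mid + 1 := by
        have : (n + 2 - 1) / 2 = mid := by omega
        rw [Nat.clog_of_two_le (by norm_num) h2, this]
      have hw0 : gp (γ t) (q 0) (q n) = 0 := gp_on_geo hγ ht
      have hmin := gp_min hhyp (γ t) (q 0) (q n) (q mid)
      rw [hw0, zero_add] at hmin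
      rcases min_le_iff.mp hmin with hc | hc
      · -- close to geodesic [q 0, q mid]
        obtain ⟨γ', hγ'⟩ := hgeo (q 0) (q mid)
        have hnear := near_geodesic hhyp hγ' (γ t)
        set t' := gp (q 0) (γ t) (q mid) with ht'
        have ht'Icc : t' ∈ Set.Icc (0:ℝ) (dist (q 0) (q mid)) := gp_mem_Icc _ _ _
        obtain ⟨i, hi, hd⟩ := IH mid hmidlt q (fun i hi => hq i (hi.trans hmidlt))
          γ' hγ' t' ht'Icc
        refine ⟨i, hi.trans hmidlt.le, ?_⟩
        have htri := dist_triangle (γ t) (γ' t') (q i)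
        have hcl : (Nat.clog 2 mid : ℝ) + 1 = ((Nat.clog 2 n : ℕ) : ℝ) := by
          rw [hclog]; push_cast; ring
        have : dist (γ t) (γ' t') ≤ 3 * δ := by linarith
        calc dist (γ t) (q i) ≤ dist (γ t) (γ' t') + dist (γ' t') (q i) := htri
          _ ≤ 3 * δ + (3 * δ * (Nat.clog 2 mid) + G) := by linarith
          _ = 3 * δ * ((Nat.clog 2 mid : ℝ) + 1) + G := by ring
          _ = 3 * δ * (Nat.clog 2 n) + G := by rw [hcl]
      · -- close to geodesic [q mid, q n]
        obtain ⟨γ', hγ'⟩ := hgeo (q mid) (q n)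
        have hnear := near_geodesic hhyp hγ' (γ t)
        set t' := gp (q mid) (γ t) (q n) with ht'
        have ht'Icc : t' ∈ Set.Icc (0:ℝ) (dist (q mid) (q n)) := gp_mem_Icc _ _ _
        set q2 : ℕ → X := fun j => q (mid + j) with hq2
        have hq2chain : ∀ i < n - mid, dist (q2 i) (q2 (i + 1)) ≤ G := by
          intro i hi
          have : dist (q (mid + i)) (q (mid + i + 1)) ≤ G := hq (mid + i) (by omega)
          simpa [hq2, Nat.add_assoc] using this
        have hq20 : q2 0 = q mid := by simp [hq2]
        have hq2n : q2 (n - mid) = q n := by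
          simp only [hq2]
          congr 1
          omega
        have hγ'' : IsGeodesicFromTo γ' (q2 0) (q2 (n - mid)) := by
          rw [hq20, hq2n]; exact hγ'
        have ht'Icc2 : t' ∈ Set.Icc (0:ℝ) (dist (q2 0) (q2 (n - mid))) := by
          rw [hq20, hq2n]; exact ht'Icc
        obtain ⟨i, hi, hd⟩ := IH (n - mid) (by omega) q2 hq2chain γ' hγ'' t' ht'Icc2
        refine ⟨mid + i, by omega, ?_⟩
        have htri := dist_triangle (γ t) (γ' t') (q2 i)
        have hclmono : Nat.clog 2 (n - mid) ≤ Nat.clog 2 mid :=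
          Nat.clog_mono_right 2 (by omega)
        have hcast : (Nat.clog 2 (n - mid) : ℝ) ≤ (Nat.clog 2 mid : ℝ) := by
          exact_mod_cast hclmono
        have hγtγ' : dist (γ t) (γ' t') ≤ 3 * δ := by linarith
        have hfin : dist (γ t) (q2 i) ≤ 3 * δ + (3 * δ * (Nat.clog 2 (n-mid)) + G) := by
          linarith
        have : dist (γ t) (q (mid + i)) ≤ 3 * δ * ((Nat.clog 2 mid : ℝ) + 1) + G := by
          have hq2i : q2 i = q (mid + i) := rfl
          rw [← hq2i]
          nlinarith [hδ, hcast]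
        calc dist (γ t) (q (mid + i)) ≤ 3 * δ * ((Nat.clog 2 mid : ℝ) + 1) + G := this
          _ = 3 * δ * (Nat.clog 2 n) + G := by rw [hclog]; push_cast; ring
  
end StmtAux

namespace StmtAux

variable {X : Type*} [MetricSpace X] {δ : ℝ}

lemma clog2_le_self : ∀ n : ℕ, Nat.clog 2 n ≤ n := by
  intro n
  induction n using Nat.strong_induction_on with
  | _ n IH =>
    rcases Nat.lt_or_ge n 2 with h2 | h2
    · interval_cases n <;> simp
    · have hrec : Nat.clog 2 n = Nat.clog 2 ((n+1)/2) + 1 := by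
        have : (n + 2 - 1) / 2 = (n+1)/2 := by omega
        rw [Nat.clog_of_two_le (by norm_num) h2, this]
      have := IH ((n+1)/2) (by omega)
      omega

lemma chain_concat {Q1 Q2 : ℕ → X} {m₁ m₂ : ℕ} {C : ℝ}
    (h1 : ∀ k < m₁, dist (Q1 k) (Q1 (k+1)) ≤ C)
    (h2 : ∀ k < m₂, dist (Q2 k) (Q2 (k+1)) ≤ C)
    (hj : Q1 m₁ = Q2 0) :
    ∀ k < m₁ + m₂,
      dist ((fun k => if k ≤ m₁ then Q1 k else Q2 (k - m₁)) k)
        ((fun k => if k ≤ m₁ then Q1 k else Q2 (k - m₁)) (k+1)) ≤ C := by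
  intro k hk
  rcases Nat.lt_or_ge k m₁ with hlt | hge
  · simp only []
    rw [if_pos (by omega), if_pos (by omega)]
    exact h1 k hlt
  · rcases Nat.eq_or_lt_of_le hge with heq | hgt
    · simp only []
      rw [if_pos (by omega), if_neg (by omega)]
      have : k + 1 - m₁ = 1 := by omega
      rw [this, ← heq, hj]
      have h0 : (0:ℕ) < m₂ := by omega
      simpa using h2 0 h0
    · simp only []
      rw [if_neg (by omega), if_neg (by omega)]
      have e1 : k + 1 - m₁ = (k - m₁) + 1 := by omega
      rw [e1]
      exact h2 (k - m₁) (by omega)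

lemma concat_val_le {Q1 Q2 : ℕ → X} {m₁ : ℕ} {k : ℕ} (hk : k ≤ m₁) :
    (fun k => if k ≤ m₁ then Q1 k else Q2 (k - m₁)) k = Q1 k := by
  simp [hk]

lemma concat_val_end {Q1 Q2 : ℕ → X} {m₁ m₂ : ℕ} (hj : Q1 m₁ = Q2 0) :
    (fun k => if k ≤ m₁ then Q1 k else Q2 (k - m₁)) (m₁ + m₂) = Q2 m₂ := by
  rcases Nat.eq_zero_or_pos m₂ with h0 | hpos
  · subst h0; simp [hj]
  · simp only []
    rw [if_neg (by omega)]
    congr 1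
    omega

/-- Subdivision of a geodesic segment into `n₁` pieces of length `≤ M`. -/
lemma subdiv_chain {σ : ℝ → X} {u v : X} (hσ : IsGeodesicFromTo σ u v) {n₁ : ℕ}
    (hn₁ : 0 < n₁) {M : ℝ} (hd : dist u v ≤ M * n₁) :
    ∀ k < n₁, dist (σ (k * (dist u v / n₁))) (σ ((k+1 : ℕ) * (dist u v / n₁))) ≤ M := by
  intro k hk
  have hn₁R : (0:ℝ) < n₁ := by exact_mod_cast hn₁
  have hstep : 0 ≤ dist u v / n₁ := by positivity
  have hmem : ∀ j : ℕ, j ≤ n₁ → (j : ℝ) * (dist u v / n₁) ∈ Set.Icc (0:ℝ) (dist u v) := by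
    intro j hj
    constructor
    · positivity
    · rw [mul_div_assoc'] at *
      rw [div_le_iff₀ hn₁R]
      have : (j:ℝ) ≤ (n₁:ℝ) := by exact_mod_cast hj
      nlinarith [dist_nonneg (x := u) (y := v)]
  have h1 := hmem k hk.le
  have h2 := hmem (k+1) hk
  have := hσ.2.2 _ h1 _ h2
  rw [this]
  have hstepM : dist u v / n₁ ≤ M := by
    rw [div_le_iff₀ hn₁R]
    exact hd
  have : ((k:ℝ) * (dist u v / n₁) - ((k+1:ℕ):ℝ) * (dist u v / n₁)) = -(dist u v / n₁) := by
    push_cast; ring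
  rw [this, abs_neg, abs_of_nonneg hstep]
  exact hstepM

lemma subdiv_end {σ : ℝ → X} {u v : X} (hσ : IsGeodesicFromTo σ u v) {n₁ : ℕ}
    (hn₁ : 0 < n₁) :
    σ ((0:ℕ) * (dist u v / n₁)) = u ∧ σ ((n₁:ℕ) * (dist u v / n₁)) = v := by
  have hn₁R : (0:ℝ) < n₁ := by exact_mod_cast hn₁
  constructor
  · have : ((0:ℕ):ℝ) * (dist u v / n₁) = 0 := by push_cast; ring
    rw [this, hσ.1]
  · have : ((n₁:ℕ):ℝ) * (dist u v / n₁) = dist u v := by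
      field_simp
    rw [this, hσ.2.1]

end StmtAux
namespace StmtAux

variable {X : Type*} [MetricSpace X] {δ : ℝ}

lemma morse_numeric {D M δ n' : ℝ} (hM0 : 0 < M) (hδ : 0 ≤ δ) (hδM : 100*δ ≤ M)
    (hD0 : 0 ≤ D) (hn'0 : 0 ≤ n')
    (hkey : D - M/10 ≤ 3*δ*n' + 2*M) (hn'M : M * n' ≤ 8*D + 4*M) : D ≤ 3*M := by
  have s1 : 3*δ*(n' * M) ≤ 3*δ*(8*D + 4*M) := by nlinarith
  have s2 : 3*δ*(8*D+4*M) ≤ (3*M/100)*(8*D+4*M) := by nlinarith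
  have s3 : (D - M/10)*M ≤ 3*δ*(n'*M) + 2*M*M := by nlinarith
  nlinarith [s1, s2, s3, hM0]

set_option maxHeartbeats 1000000 in
lemma morse4a (hhyp : GromovHyperbolic X δ) (hgeo : GeodesicSpace X) (hδ : 0 ≤ δ)
    {M : ℝ} (hδM : 100 * δ ≤ M) (hM0 : 0 < M)
    {n : ℕ} {S : ℕ → X}
    (hlow : ∀ i ≤ n, ∀ j ≤ n, M * |(i:ℝ) - (j:ℝ)| ≤ dist (S i) (S j))
    (hgap : ∀ i < n, dist (S i) (S (i+1)) ≤ 2 * M)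
    {γ : ℝ → X} (hγ : IsGeodesicFromTo γ (S 0) (S n)) :
    ∀ t ∈ Set.Icc (0:ℝ) (dist (S 0) (S n)), ∃ i ≤ n, dist (γ t) (S i) ≤ 3 * M := by
  have hℓ0 : 0 ≤ dist (S 0) (S n) := dist_nonneg
  set ℓ := dist (S 0) (S n) with hℓ
  have hrne : (Finset.range (n+1)).Nonempty := Finset.nonempty_range_add_one
  set F : ℝ → ℝ := fun t => (Finset.range (n+1)).inf' hrne (fun i => dist (γ t) (S i)) with hF
  have hFle : ∀ t : ℝ, ∀ i ≤ n, F t ≤ dist (γ t) (S i) := by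
    intro t i hi
    exact Finset.inf'_le _ (Finset.mem_range.mpr (by omega))
  have hFwit : ∀ t : ℝ, ∃ i ≤ n, F t = dist (γ t) (S i) := by
    intro t
    obtain ⟨i, hi, hEq⟩ := Finset.exists_mem_eq_inf' hrne (fun i => dist (γ t) (S i))
    exact ⟨i, Nat.lt_succ_iff.mp (Finset.mem_range.mp hi), hEq⟩
  have hF0 : ∀ t : ℝ, 0 ≤ F t := by
    intro t
    obtain ⟨i, _, hEq⟩ := hFwit t
    rw [hEq]; exact dist_nonneg
  have hFbd : ∀ t ∈ Set.Icc (0:ℝ) ℓ, F t ≤ ℓ := by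
    intro t ht
    calc F t ≤ dist (γ t) (S 0) := hFle t 0 (Nat.zero_le _)
      _ = t := geo_dist_left hγ ht
      _ ≤ ℓ := ht.2
  set D := sSup (F '' Set.Icc (0:ℝ) ℓ) with hD
  have himne : (F '' Set.Icc (0:ℝ) ℓ).Nonempty := ⟨F 0, ⟨0, ⟨le_refl _, hℓ0⟩, rfl⟩⟩
  have himbd : BddAbove (F '' Set.Icc (0:ℝ) ℓ) := by
    refine ⟨ℓ, ?_⟩
    rintro _ ⟨t, ht, rfl⟩
    exact hFbd t ht
  have hDub : ∀ t ∈ Set.Icc (0:ℝ) ℓ, F t ≤ D := fun t ht => le_csSup himbd ⟨t, ht, rfl⟩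
  have hD0 : 0 ≤ D := le_trans (hF0 0) (hDub 0 ⟨le_refl _, hℓ0⟩)
  suffices hD3 : D ≤ 3 * M by
    intro t ht
    obtain ⟨i, hi, hEq⟩ := hFwit t
    exact ⟨i, hi, by rw [← hEq]; exact le_trans (hDub t ht) hD3⟩
  obtain ⟨ft, hmem, hft⟩ := exists_lt_of_lt_csSup himne (show D - M/10 < D by linarith)
  obtain ⟨t₀, ht₀Icc, rfl⟩ := hmem
  set tm := max 0 (t₀ - 2*D) with htm
  set tp := min ℓ (t₀ + 2*D) with htp
  have htmIcc : tm ∈ Set.Icc (0:ℝ) ℓ :=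
    ⟨le_max_left _ _, max_le hℓ0 (le_trans (by linarith) ht₀Icc.2)⟩
  have htpIcc : tp ∈ Set.Icc (0:ℝ) ℓ :=
    ⟨le_min hℓ0 (by linarith [ht₀Icc.1, hD0]), min_le_left _ _⟩
  have htmle : tm ≤ t₀ := max_le ht₀Icc.1 (by linarith)
  have htple : t₀ ≤ tp := le_min ht₀Icc.2 (by linarith)
  have htm2D : t₀ - tm ≤ 2*D := by
    have := le_max_right 0 (t₀ - 2*D); linarith
  have htp2D : tp - t₀ ≤ 2*D := by
    have := min_le_right ℓ (t₀ + 2*D); linarith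
  have hdtm : dist (γ tm) (γ t₀) = t₀ - tm := by
    rw [hγ.2.2 tm htmIcc t₀ ht₀Icc, abs_of_nonpos (by linarith), neg_sub]
  have hdtp : dist (γ t₀) (γ tp) = tp - t₀ := by
    rw [hγ.2.2 t₀ ht₀Icc tp htpIcc, abs_of_nonpos (by linarith), neg_sub]
  obtain ⟨a, han, hEa⟩ := hFwit tm
  obtain ⟨b, hbn, hEb⟩ := hFwit tp
  have hda : dist (γ tm) (S a) ≤ D := by rw [← hEa]; exact hDub tm htmIcc
  have hdb : dist (γ tp) (S b) ≤ D := by rw [← hEb]; exact hDub tp htpIcc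
  obtain ⟨σ₁, hσ₁⟩ := hgeo (γ tm) (S a)
  obtain ⟨σ₂, hσ₂⟩ := hgeo (S b) (γ tp)
  set n₁ := Nat.ceil (D / M) + 1 with hn₁
  have hn₁pos : 0 < n₁ := Nat.succ_pos _
  have hn₁R : (n₁:ℝ) * M ≤ D + 2*M := by
    have h1 : (Nat.ceil (D/M) : ℝ) < D/M + 1 := Nat.ceil_lt_add_one (by positivity)
    have h2 : (D/M) * M = D := by field_simp
    have : (n₁ : ℝ) = (Nat.ceil (D/M) : ℝ) + 1 := by push_cast [hn₁]; ring
    nlinarith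
  have hMn₁ : D ≤ M * n₁ := by
    have h1 : D/M ≤ (Nat.ceil (D/M) : ℝ) := Nat.le_ceil _
    have : (n₁ : ℝ) = (Nat.ceil (D/M) : ℝ) + 1 := by push_cast [hn₁]; ring
    rw [this]
    have h2 : (D/M) * M = D := by field_simp
    nlinarith
  -- the three chains
  set d₁ := dist (γ tm) (S a) with hd₁
  set d₂ := dist (S b) (γ tp) with hd₂
  have hd₂D : d₂ ≤ D := by rw [hd₂, dist_comm]; exact hdb
  set A : ℕ → X := fun k => σ₁ (k * (d₁ / n₁)) with hA
  set Cc : ℕ → X := fun k => σ₂ (k * (d₂ / n₁)) with hCc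
  have hAgap : ∀ k < n₁, dist (A k) (A (k+1)) ≤ 2*M := by
    intro k hk
    have := subdiv_chain hσ₁ hn₁pos (M := M) (by rw [← hd₁] at *; nlinarith) k hk
    rw [← hd₁] at this
    calc dist (A k) (A (k+1)) ≤ M := by exact_mod_cast this
      _ ≤ 2*M := by linarith
  have hCgap : ∀ k < n₁, dist (Cc k) (Cc (k+1)) ≤ 2*M := by
    intro k hk
    have := subdiv_chain hσ₂ hn₁pos (M := M) (by rw [← hd₂] at *; nlinarith) k hk
    rw [← hd₂] at this
    calc dist (Cc k) (Cc (k+1)) ≤ M := by exact_mod_cast this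
      _ ≤ 2*M := by linarith
  have hA0 : A 0 = γ tm := by
    have := (subdiv_end hσ₁ hn₁pos).1
    rw [← hd₁] at this
    simp only [hA]
    exact_mod_cast this
  have hAn₁ : A n₁ = S a := by
    have := (subdiv_end hσ₁ hn₁pos).2
    rw [← hd₁] at this
    simp only [hA]
    exact_mod_cast this
  have hC0 : Cc 0 = S b := by
    have := (subdiv_end hσ₂ hn₁pos).1
    rw [← hd₂] at this
    simp only [hCc]
    exact_mod_cast this
  have hCn₁ : Cc n₁ = γ tp := by
    have := (subdiv_end hσ₂ hn₁pos).2
    rw [← hd₂] at this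
    simp only [hCc]
    exact_mod_cast this
  -- the inner walk
  set cnt := (b - a) + (a - b) with hcnt
  set W : ℕ → X := fun k => S (if a ≤ b then a + k else a - k) with hW
  have hW0 : W 0 = S a := by
    by_cases hab : a ≤ b
    · simp only [hW, if_pos hab]
      congr 1
    · simp only [hW, if_neg hab]
      congr 1
  have hWcnt : W cnt = S b := by
    by_cases hab : a ≤ b
    · simp only [hW, if_pos hab]; congr 1; omega
    · simp only [hW, if_neg hab]; congr 1; omega
  have hWgap : ∀ k < cnt, dist (W k) (W (k+1)) ≤ 2*M := by
    intro k hk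
    by_cases hab : a ≤ b
    · simp only [hW, hab, if_true]
      have e : a + (k+1) = (a+k)+1 := rfl
      rw [e]
      exact hgap (a+k) (by omega)
    · simp only [hW, hab, if_false]
      have e : a - k = (a - (k+1)) + 1 := by omega
      rw [dist_comm, e]
      exact hgap (a - (k+1)) (by omega)
  have hWchain : ∀ k ≤ cnt, ∃ j ≤ n, W k = S j := by
    intro k hk
    by_cases hab : a ≤ b
    · exact ⟨a + k, by omega, by simp [hW, hab]⟩
    · exact ⟨a - k, by omega, by simp [hW, hab]⟩
  -- assembled chain
  set QA : ℕ → X := fun k => if k ≤ n₁ then A k else W (k - n₁) with hQA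
  have hjAW : A n₁ = W 0 := by rw [hAn₁, hW0]
  have hQAgap : ∀ k < n₁ + cnt, dist (QA k) (QA (k+1)) ≤ 2*M := by
    have := chain_concat hAgap hWgap hjAW
    rw [← hQA] at this
    exact this
  have hQAend : QA (n₁ + cnt) = S b := by
    have := concat_val_end (Q1 := A) (Q2 := W) (m₂ := cnt) hjAW
    rw [← hQA] at this
    rw [this, hWcnt]
  set Q : ℕ → X := fun k => if k ≤ n₁ + cnt then QA k else Cc (k - (n₁ + cnt)) with hQdef
  set n' := n₁ + cnt + n₁ with hn'
  have hjQC : QA (n₁ + cnt) = Cc 0 := by rw [hQAend, hC0]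
  have hQgap : ∀ k < n', dist (Q k) (Q (k+1)) ≤ 2*M := by
    have := chain_concat hQAgap hCgap hjQC
    rw [← hQdef] at this
    exact this
  have hQ0 : Q 0 = γ tm := by
    have h1 : Q 0 = QA 0 := by rw [hQdef]; simp
    have h2 : QA 0 = A 0 := by rw [hQA]; simp
    rw [h1, h2, hA0]
  have hQn' : Q n' = γ tp := by
    have := concat_val_end (Q1 := QA) (Q2 := Cc) (m₂ := n₁) hjQC
    rw [← hQdef] at this
    rw [hn', this, hCn₁]
  -- the subgeodesic
  have hdtmtp : dist (γ tm) (γ tp) = tp - tm := by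
    rw [hγ.2.2 tm htmIcc tp htpIcc, abs_of_nonpos (by linarith), neg_sub]
  set γ2 : ℝ → X := fun s => γ (tm + s) with hγ2
  have hγ2geo : IsGeodesicFromTo γ2 (γ tm) (γ tp) := by
    refine ⟨by simp [hγ2], ?_, ?_⟩
    · rw [hdtmtp, hγ2]
      show γ (tm + (tp - tm)) = γ tp
      congr 1; ring
    · intro s hs u hu
      rw [hdtmtp] at hs hu
      have h1 : tm + s ∈ Set.Icc (0:ℝ) ℓ := ⟨by linarith [htmIcc.1, hs.1], by linarith [htpIcc.2, hs.2]⟩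
      have h2 : tm + u ∈ Set.Icc (0:ℝ) ℓ := ⟨by linarith [htmIcc.1, hu.1], by linarith [htpIcc.2, hu.2]⟩
      have := hγ.2.2 (tm + s) h1 (tm + u) h2
      rw [hγ2]
      show dist (γ (tm + s)) (γ (tm + u)) = |s - u|
      rw [this]
      congr 1; ring
  have hγ2geo' : IsGeodesicFromTo γ2 (Q 0) (Q n') := by rw [hQ0, hQn']; exact hγ2geo
  have hdQ : dist (Q 0) (Q n') = tp - tm := by rw [hQ0, hQn']; exact hdtmtp
  have htIcc2 : t₀ - tm ∈ Set.Icc (0:ℝ) (dist (Q 0) (Q n')) := by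
    rw [hdQ]; exact ⟨by linarith, by linarith⟩
  obtain ⟨i, hi, hdy⟩ := dyadic hhyp hgeo hδ (by linarith : (0:ℝ) ≤ 2*M) n' Q hQgap γ2 hγ2geo'
    (t₀ - tm) htIcc2
  have hγ2t : γ2 (t₀ - tm) = γ t₀ := by
    rw [hγ2]
    show γ (tm + (t₀ - tm)) = γ t₀
    congr 1; ring
  rw [hγ2t] at hdy
  -- lower bound on distances from γ t₀ to all chain points
  have hface1 : tm = t₀ - 2*D ∨ d₁ = 0 ∧ γ tm = S 0 := by
    rcases le_total 0 (t₀ - 2*D) with hc | hc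
    · left; rw [htm, max_eq_right hc]
    · right
      have e : tm = 0 := by rw [htm, max_eq_left hc]
      have e2 : γ tm = S 0 := by rw [e, hγ.1]
      refine ⟨?_, e2⟩
      have : F tm ≤ dist (γ tm) (S 0) := hFle tm 0 (Nat.zero_le _)
      rw [e2, dist_self] at this
      have := hF0 tm
      rw [← hEa]
      linarith
  have hface2 : tp = t₀ + 2*D ∨ d₂ = 0 ∧ γ tp = S n := by
    rcases le_total (t₀ + 2*D) ℓ with hc | hc
    · left; rw [htp, min_eq_right hc]
    · right
      have e : tp = ℓ := by rw [htp, min_eq_left hc]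
      have e2 : γ tp = S n := by rw [e, hℓ, hγ.2.1]
      refine ⟨?_, e2⟩
      have : F tp ≤ dist (γ tp) (S n) := hFle tp n (le_refl _)
      rw [e2, dist_self] at this
      have := hF0 tp
      rw [hd₂, dist_comm (S b) (γ tp), ← hEb]
      linarith
  have hQfar : ∀ k ≤ n', D - M/10 ≤ dist (γ t₀) (Q k) := by
    intro k hk
    have hchainpt : ∀ j ≤ n, D - M/10 ≤ dist (γ t₀) (S j) := by
      intro j hj
      have := hFle t₀ j hj
      linarith
    rcases Nat.lt_or_ge (n₁ + cnt) k with hk3 | hk12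
    · -- third region: on σ₂
      have hQk : Q k = Cc (k - (n₁ + cnt)) := by rw [hQdef]; simp [Nat.not_le.mpr hk3]
      set j := k - (n₁ + cnt) with hj
      have hjn₁ : j ≤ n₁ := by omega
      have hparam : (j:ℝ) * (d₂/n₁) ∈ Set.Icc (0:ℝ) d₂ := by
        constructor
        · positivity
        · have hjR : (j:ℝ) ≤ (n₁:ℝ) := by exact_mod_cast hjn₁
          have hn₁R' : (0:ℝ) < (n₁:ℝ) := by exact_mod_cast hn₁pos
          rw [mul_div_assoc']
          rw [div_le_iff₀ hn₁R']
          have := dist_nonneg (x := S b) (y := γ tp)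
          rw [← hd₂] at this
          nlinarith
      have hCck : dist (Cc j) (γ tp) = d₂ - (j:ℝ) * (d₂/n₁) := by
        have h := geo_dist_right hσ₂ hparam
        rw [← hd₂] at h
        simpa only [hCc] using h
      rcases hface2 with hco | ⟨hz, hend⟩
      · have h1 : dist (γ t₀) (Cc j) ≥ dist (γ t₀) (γ tp) - dist (Cc j) (γ tp) := by
          have := dist_triangle (γ t₀) (Cc j) (γ tp)
          have hc := dist_comm (Cc j) (γ tp)
          linarith
        have h2 : dist (Cc j) (γ tp) ≤ d₂ := by
          rw [hCck]
          have : 0 ≤ (j:ℝ) * (d₂/n₁) := hparam.1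
          linarith
        rw [hQk]
        linarith [h1, h2, hd₂D, hco, hdtp]
      ·
        have hp0 : (j:ℝ) * (d₂/n₁) = 0 := by rw [hz]; simp
        have : Cc j = S b := by
          rw [hCc]
          show σ₂ ((j:ℝ) * (d₂/n₁)) = S b
          rw [hp0, hσ₂.1]
        rw [hQk, this]
        exact hchainpt b hbn
    · rcases Nat.lt_or_ge n₁ k with hk2 | hk1
      · -- middle region: chain points
        have hQk : Q k = W (k - n₁) := by
          rw [hQdef]
          simp only [if_pos hk12, hQA]
          rw [if_neg (by omega)]
        obtain ⟨j, hjn, hWj⟩ := hWchain (k - n₁) (by omega)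
        rw [hQk, hWj]
        exact hchainpt j hjn
      · -- first region: on σ₁
        have hQk : Q k = A k := by
          rw [hQdef]
          simp only [if_pos (by omega : k ≤ n₁ + cnt), hQA]
          rw [if_pos hk1]
        have hparam : (k:ℝ) * (d₁/n₁) ∈ Set.Icc (0:ℝ) d₁ := by
          constructor
          · positivity
          · have hjR : (k:ℝ) ≤ (n₁:ℝ) := by exact_mod_cast hk1
            have hn₁R' : (0:ℝ) < (n₁:ℝ) := by exact_mod_cast hn₁pos
            rw [mul_div_assoc']
            rw [div_le_iff₀ hn₁R']
            have := dist_nonneg (x := γ tm) (y := S a)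
            rw [← hd₁] at this
            nlinarith
        have hAk : dist (A k) (γ tm) = (k:ℝ) * (d₁/n₁) := by
          have h := geo_dist_left hσ₁ hparam
          simpa only [hA] using h
        rcases hface1 with hco | ⟨hz, hend⟩
        · have h1 : dist (γ t₀) (A k) ≥ dist (γ tm) (γ t₀) - dist (A k) (γ tm) := by
            have := dist_triangle (γ tm) (A k) (γ t₀)
            have hc1 := dist_comm (γ t₀) (A k)
            have hc2 := dist_comm (A k) (γ tm)
            linarith [dist_comm (γ tm) (A k)]
          have h2 : dist (A k) (γ tm) ≤ d₁ := by
            rw [hAk]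
            have hjR : (k:ℝ) ≤ (n₁:ℝ) := by exact_mod_cast hk1
            have hn₁R' : (0:ℝ) < (n₁:ℝ) := by exact_mod_cast hn₁pos
            rw [mul_div_assoc', div_le_iff₀ hn₁R']
            have := dist_nonneg (x := γ tm) (y := S a)
            rw [← hd₁] at this
            nlinarith
          rw [hQk]
          linarith [h1, h2, hda, hco, hdtm]
        · have hp0 : (k:ℝ) * (d₁/n₁) = 0 := by rw [hz]; simp
          have : A k = S 0 := by
            rw [hA]
            show σ₁ ((k:ℝ) * (d₁/n₁)) = S 0
            rw [hp0, hσ₁.1, hend]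
          rw [hQk, this]
          exact hchainpt 0 (Nat.zero_le _)
  -- count bound
  have hcntR : M * (cnt:ℝ) ≤ 6*D := by
    have h1 := hlow a han b hbn
    have h2 : |(a:ℝ) - (b:ℝ)| = (cnt:ℝ) := by
      rcases le_total a b with hab | hab
      · have habR : (a:ℝ) ≤ (b:ℝ) := by exact_mod_cast hab
        have e : cnt = b - a := by omega
        have eR : (cnt:ℝ) = (b:ℝ) - (a:ℝ) := by
          rw [e, Nat.cast_sub hab]
        rw [eR, abs_sub_comm, abs_of_nonneg (by linarith)]
      · have habR : (b:ℝ) ≤ (a:ℝ) := by exact_mod_cast hab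
        have e : cnt = a - b := by omega
        have eR : (cnt:ℝ) = (a:ℝ) - (b:ℝ) := by
          rw [e, Nat.cast_sub hab]
        rw [eR, abs_of_nonneg (by linarith)]
    rw [h2] at h1
    have h3 : dist (S a) (S b) ≤ 6*D := by
      have t1 := dist_triangle (S a) (γ t₀) (S b)
      have t2 := dist_triangle (S a) (γ tm) (γ t₀)
      have t3 := dist_triangle (γ t₀) (γ tp) (S b)
      have hc := dist_comm (S a) (γ tm)
      linarith [hda, hdb, hdtm, hdtp, htm2D, htp2D]
    linarith
  -- final numerics
  have hclogR : (Nat.clog 2 n' : ℝ) ≤ (n' : ℝ) := by exact_mod_cast clog2_le_self n'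
  have hfar := hQfar i hi
  have m1 : 3*δ*(Nat.clog 2 n' : ℝ) ≤ 3*δ*(n':ℝ) :=
    mul_le_mul_of_nonneg_left hclogR (by linarith)
  have hkey : D - M/10 ≤ 3*δ*(n':ℝ) + 2*M := by
    linarith only [hdy, hfar, m1]
  have hn'M : M * (n':ℝ) ≤ 8*D + 4*M := by
    have e : (n':ℝ) = (n₁:ℝ) + (cnt:ℝ) + (n₁:ℝ) := by
      rw [hn']; push_cast; ring
    rw [e]
    linarith only [hn₁R, hcntR]
  exact morse_numeric hM0 hδ hδM hD0 (Nat.cast_nonneg n') hkey hn'M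

end StmtAux
namespace StmtAux

variable {X : Type*} [MetricSpace X] {δ : ℝ}

lemma chain_upper {S : ℕ → X} {n : ℕ} {C : ℝ} (hC : 0 ≤ C)
    (hgap : ∀ i < n, dist (S i) (S (i+1)) ≤ C) :
    ∀ i j, i ≤ j → j ≤ n → dist (S i) (S j) ≤ C * ((j:ℝ) - (i:ℝ)) := by
  intro i j
  induction j with
  | zero =>
    intro hij hjn
    have : i = 0 := by omega
    subst this
    simp
  | succ j IH =>
    intro hij hjn
    rcases Nat.eq_or_lt_of_le hij with he | hl
    · rw [he, dist_self]
      have e : (((j+1:ℕ)):ℝ) - (((j+1:ℕ)):ℝ) = 0 := by ring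
      rw [e, mul_zero]
    · have h1 := IH (by omega) (by omega)
      have h2 := hgap j (by omega)
      calc dist (S i) (S (j+1)) ≤ dist (S i) (S j) + dist (S j) (S (j+1)) :=
            dist_triangle _ _ _
        _ ≤ C * ((j:ℝ) - i) + C := by linarith
        _ = C * (((j+1:ℕ):ℝ) - i) := by push_cast; ring

lemma chain_upper' {S : ℕ → X} {n : ℕ} {C : ℝ} (hC : 0 ≤ C)
    (hgap : ∀ i < n, dist (S i) (S (i+1)) ≤ C) :
    ∀ i ≤ n, ∀ j ≤ n, dist (S i) (S j) ≤ C * |(i:ℝ) - (j:ℝ)| := by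
  intro i hi j hj
  rcases le_total i j with hij | hij
  · have := chain_upper hC hgap i j hij hj
    have habs : |(i:ℝ) - j| = (j:ℝ) - i := by
      rw [abs_sub_comm, abs_of_nonneg (by exact_mod_cast sub_nonneg.mpr (by exact_mod_cast hij : (i:ℝ) ≤ j))]
    rw [habs]
    exact this
  · have := chain_upper hC hgap j i hij hi
    have habs : |(i:ℝ) - j| = (i:ℝ) - j := by
      rw [abs_of_nonneg (by exact_mod_cast sub_nonneg.mpr (by exact_mod_cast hij : (j:ℝ) ≤ i))]
    rw [habs, dist_comm]
    exact this

lemma int_crossing {f : ℕ → ℤ} {KK : ℕ} {J : ℤ} (hJ : 0 ≤ J)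
    (hstep : ∀ k < KK, f (k+1) ≤ f k + J ∧ f k ≤ f (k+1) + J)
    (v : ℤ) (h0 : f 0 ≤ v) (hend : v ≤ f KK) :
    ∃ k ≤ KK, v - J ≤ f k ∧ f k ≤ v + J := by
  by_contra hcon
  push_neg at hcon
  have hall : ∀ k ≤ KK, f k ≤ v := by
    intro k
    induction k with
    | zero => intro _; exact h0
    | succ k IH =>
      intro hk
      have hfk := IH (by omega)
      have hs := hstep k (by omega)
      by_contra hgt
      push_neg at hgt
      have hc := hcon (k+1) hk (by omega)
      omega
  have h1 := hall KK (le_refl _)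
  have h2 := hcon KK (le_refl _) (by omega)
  omega

set_option maxHeartbeats 1000000 in
lemma morse4b (hhyp : GromovHyperbolic X δ) (hgeo : GeodesicSpace X) (hδ : 0 ≤ δ)
    {M : ℝ} (hδM : 100 * δ ≤ M) (hM0 : 0 < M)
    {n : ℕ} {S : ℕ → X}
    (hlow : ∀ i ≤ n, ∀ j ≤ n, M * |(i:ℝ) - (j:ℝ)| ≤ dist (S i) (S j))
    (hgap : ∀ i < n, dist (S i) (S (i+1)) ≤ 2 * M)
    {γ : ℝ → X} (hγ : IsGeodesicFromTo γ (S 0) (S n)) :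
    ∀ i₀ ≤ n, ∃ t ∈ Set.Icc (0:ℝ) (dist (S 0) (S n)), dist (γ t) (S i₀) ≤ 17 * M := by
  intro i₀ hi₀
  set ℓ := dist (S 0) (S n) with hℓ
  have hℓ0 : 0 ≤ ℓ := dist_nonneg
  set KK := Nat.ceil (ℓ / M) with hKK
  set tg : ℕ → ℝ := fun k => min ((k:ℝ) * M) ℓ with htg
  have htgIcc : ∀ k, tg k ∈ Set.Icc (0:ℝ) ℓ := by
    intro k
    exact ⟨le_min (by positivity) hℓ0, min_le_right _ _⟩
  have htg0 : tg 0 = 0 := by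
    simp only [htg, Nat.cast_zero, zero_mul]
    exact min_eq_left hℓ0
  have htgKK : tg KK = ℓ := by
    have h1 : ℓ ≤ (KK:ℝ) * M := by
      have := Nat.le_ceil (ℓ / M)
      rw [← hKK] at this
      calc ℓ = (ℓ / M) * M := by field_simp
        _ ≤ (KK:ℝ) * M := by nlinarith
    simp [htg, min_eq_right h1]
  have htgstep : ∀ k, tg k ≤ tg (k+1) ∧ tg (k+1) ≤ tg k + M := by
    intro k
    constructor
    · apply min_le_min _ (le_refl _)
      push_cast
      nlinarith [hM0.le]
    · rcases le_total ((k:ℝ)*M) ℓ with hc | hc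
      · have e : tg k = (k:ℝ)*M := by
          simp only [htg]
          exact min_eq_left hc
        have h1 : tg (k+1) ≤ ((k+1:ℕ):ℝ)*M := min_le_left _ _
        rw [e]
        push_cast at h1
        linarith
      · have e : tg k = ℓ := by
          simp only [htg]
          exact min_eq_right hc
        have h1 : tg (k+1) ≤ ℓ := min_le_right _ _
        rw [e]
        linarith [hM0.le]
  have hwit : ∀ k : ℕ, ∃ i, i ≤ n ∧ dist (γ (tg k)) (S i) ≤ 3*M := by
    intro k
    obtain ⟨i, hi, hd⟩ := morse4a hhyp hgeo hδ hδM hM0 hlow hgap hγ (tg k) (htgIcc k)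
    exact ⟨i, hi, hd⟩
  choose f hf1 hf2 using hwit
  have hγstep : ∀ k, dist (γ (tg k)) (γ (tg (k+1))) ≤ M := by
    intro k
    have := hγ.2.2 (tg k) (htgIcc k) (tg (k+1)) (htgIcc (k+1))
    rw [this]
    have h := htgstep k
    rw [abs_of_nonpos (by linarith)]
    linarith
  have hfstep : ∀ k, M * |((f (k+1)):ℝ) - (f k:ℝ)| ≤ 7 * M := by
    intro k
    have h1 := hlow (f (k+1)) (hf1 _) (f k) (hf1 _)
    have t1 := dist_triangle (S (f (k+1))) (γ (tg (k+1))) (γ (tg k))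
    have t2 := dist_triangle (S (f (k+1))) (γ (tg k)) (S (f k))
    have c1 := dist_comm (γ (tg (k+1))) (S (f (k+1)))
    have c2 := dist_comm (γ (tg (k+1))) (γ (tg k))
    calc M * |((f (k+1)):ℝ) - (f k:ℝ)| ≤ dist (S (f (k+1))) (S (f k)) := h1
      _ ≤ 7 * M := by
          have := hγstep k
          have := hf2 k
          have := hf2 (k+1)
          linarith
  have hfstepZ : ∀ k, ((f (k+1)):ℤ) ≤ (f k:ℤ) + 7 ∧ (f k:ℤ) ≤ ((f (k+1)):ℤ) + 7 := by
    intro k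
    have h := hfstep k
    have h2 : |((f (k+1)):ℝ) - (f k:ℝ)| ≤ 7 := by
      by_contra hgt
      push_neg at hgt
      nlinarith
    have h3 := abs_le.mp h2
    constructor
    · have := h3.2
      have : ((f (k+1)):ℝ) ≤ (f k:ℝ) + 7 := by linarith
      exact_mod_cast this
    · have := h3.1
      have : ((f k):ℝ) ≤ ((f (k+1)):ℝ) + 7 := by linarith
      exact_mod_cast this
  -- endpoint bounds
  have hf0 : (f 0 : ℤ) ≤ 3 := by
    have h1 := hlow (f 0) (hf1 _) 0 (Nat.zero_le _)
    push_cast at h1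
    have h2 := hf2 0
    rw [htg0, hγ.1] at h2
    rw [dist_comm] at h2
    have h3 : M * |((f 0):ℝ) - (0:ℝ)| ≤ 3 * M := le_trans h1 h2
    have h4 : |((f 0):ℝ)| ≤ 3 := by
      by_contra hgt
      push_neg at hgt
      simp only [sub_zero] at h3
      nlinarith
    have h5 : ((f 0):ℝ) ≤ 3 := le_trans (le_abs_self _) h4
    exact_mod_cast h5
  have hfKK : (n:ℤ) ≤ (f KK : ℤ) + 3 := by
    have h1 := hlow (f KK) (hf1 _) n (le_refl _)
    have h2 := hf2 KK
    rw [htgKK, hℓ, hγ.2.1] at h2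
    rw [dist_comm] at h2
    have h3 : M * |((f KK):ℝ) - (n:ℝ)| ≤ 3 * M := le_trans h1 h2
    have h4 : |((f KK):ℝ) - n| ≤ 3 := by
      by_contra hgt
      push_neg at hgt
      nlinarith
    have h5 : (n:ℝ) - (f KK) ≤ 3 := by
      have := (abs_le.mp h4).1
      linarith
    have : (n:ℝ) ≤ ((f KK):ℝ) + 3 := by linarith
    exact_mod_cast this
  -- find k with |f k - i₀| ≤ 7
  have hkey : ∃ k ≤ KK, |(f k : ℤ) - (i₀:ℤ)| ≤ 7 := by
    rcases le_total ((i₀:ℤ)) (f 0 : ℤ) with hc | hc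
    · exact ⟨0, Nat.zero_le _, by rw [abs_le]; omega⟩
    · rcases le_total ((f KK : ℤ)) (i₀:ℤ) with hc2 | hc2
      · refine ⟨KK, le_refl _, ?_⟩
        have : (i₀:ℤ) ≤ (n:ℤ) := by exact_mod_cast hi₀
        rw [abs_le]
        omega
      · obtain ⟨k, hk, hk2⟩ := int_crossing (J := 7) (by norm_num)
          (fun k _ => hfstepZ k) (i₀:ℤ) hc hc2
        exact ⟨k, hk, by rw [abs_le]; omega⟩
  obtain ⟨k, hkKK, hk7⟩ := hkey
  refine ⟨tg k, htgIcc k, ?_⟩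
  have h1 := hf2 k
  have h2 := chain_upper' (by linarith : (0:ℝ) ≤ 2*M) hgap (f k) (hf1 _) i₀ hi₀
  have h3 : |((f k):ℝ) - (i₀:ℝ)| ≤ 7 := by
    have : ((|(f k : ℤ) - (i₀:ℤ)| : ℤ) : ℝ) ≤ 7 := by exact_mod_cast hk7
    rw [Int.cast_abs] at this
    push_cast at this
    exact this
  calc dist (γ (tg k)) (S i₀) ≤ dist (γ (tg k)) (S (f k)) + dist (S (f k)) (S i₀) :=
        dist_triangle _ _ _
    _ ≤ 3*M + 2*M*|((f k):ℝ) - (i₀:ℝ)| := by linarith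
    _ ≤ 3*M + 2*M*7 := by nlinarith
    _ = 17*M := by ring

end StmtAux
namespace StmtAux

variable {X : Type*} [MetricSpace X] {δ : ℝ}

set_option maxHeartbeats 1000000 in
lemma lemmaM (hhyp : GromovHyperbolic X δ) (hgeo : GeodesicSpace X) (hδ : 0 ≤ δ)
    {M : ℝ} (hδM : 100 * δ ≤ M) (hM0 : 0 < M)
    {m : ℕ} {S P : ℕ → X} {r : ℝ}
    (hSlow : ∀ i ≤ 2*m, ∀ j ≤ 2*m, M * |(i:ℝ) - (j:ℝ)| ≤ dist (S i) (S j))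
    (hSgap : ∀ i < 2*m, dist (S i) (S (i+1)) ≤ 2*M)
    (hPlow : ∀ i ≤ 2*m, ∀ j ≤ 2*m, M * |(i:ℝ) - (j:ℝ)| ≤ dist (P i) (P j))
    (hPgap : ∀ i < 2*m, dist (P i) (P (i+1)) ≤ 2*M)
    (hr0 : dist (P 0) (S 0) ≤ r)
    (hr2 : dist (P (2*m)) (S (2*m)) ≤ r)
    (hmM : r + 18*M + 5*δ ≤ (m:ℝ) * M) :
    ∃ i ≤ 2*m, dist (P m) (S i) ≤ 21 * M := by
  have hr0' : 0 ≤ r := le_trans dist_nonneg hr0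
  -- geodesic along the P-chain
  obtain ⟨γ', hγ'⟩ := hgeo (P 0) (P (2*m))
  obtain ⟨t', ht'Icc, hw'⟩ := morse4b hhyp hgeo hδ hδM hM0 hPlow hPgap hγ' m (by omega)
  set w' := γ' t' with hw'def
  -- distance from P m to P 0 and P 2m
  have hPm0 : (m:ℝ) * M ≤ dist (P 0) (P m) := by
    have := hPlow 0 (by omega) m (by omega)
    have e : |((0:ℕ):ℝ) - (m:ℝ)| = (m:ℝ) := by
      simp [abs_of_nonpos]
    rw [e] at this
    linarith [this]
  have hPm2 : (m:ℝ) * M ≤ dist (P (2*m)) (P m) := by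
    have := hPlow (2*m) (by omega) m (by omega)
    have e : |((2*m:ℕ):ℝ) - (m:ℝ)| = (m:ℝ) := by
      rw [abs_of_nonneg]
      · push_cast; ring
      · push_cast; nlinarith [Nat.cast_nonneg (α := ℝ) m]
    rw [e] at this
    linarith [this]
  have hPmw' : dist (P m) w' ≤ 17*M := by
    rw [dist_comm]; exact hw'
  -- first corner cut
  have h0 : gp w' (P 0) (P (2*m)) = 0 := gp_on_geo hγ' ht'Icc
  have hmin1 := gp_min hhyp w' (P 0) (P (2*m)) (S (2*m))
  rw [h0, zero_add] at hmin1
  have hex1 : δ < gp w' (S (2*m)) (P (2*m)) := by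
    have e1 : dist (P (2*m)) w' ≥ (m:ℝ)*M - 17*M := by
      have tA := dist_triangle (P (2*m)) w' (P m)
      have c1 := dist_comm w' (P m)
      linarith [hPm2, hPmw']
    have e2 : dist (S (2*m)) w' ≥ (m:ℝ)*M - 17*M - r := by
      have tB := dist_triangle (P (2*m)) (S (2*m)) w'
      linarith [hr2, e1]
    unfold gp
    have hc2 := dist_comm (S (2*m)) (P (2*m))
    linarith [hr2, e1, e2]
  have hcut1 : gp w' (P 0) (S (2*m)) ≤ δ := by
    rcases min_le_iff.mp hmin1 with hc | hc
    · exact hc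
    · linarith
  -- second corner cut
  obtain ⟨γ'', hγ''⟩ := hgeo (P 0) (S (2*m))
  have hnear1 := near_geodesic hhyp hγ'' w'
  set t₀ := gp (P 0) w' (S (2*m)) with ht₀def
  set u₁ := γ'' t₀ with hu₁def
  have hwu₁ : dist w' u₁ ≤ 3*δ := by
    have := hnear1
    linarith [hcut1]
  have h0' : gp u₁ (P 0) (S (2*m)) = 0 := gp_on_geo hγ'' (gp_mem_Icc _ _ _)
  have hmin2 := gp_min hhyp u₁ (P 0) (S (2*m)) (S 0)
  rw [h0', zero_add] at hmin2
  have hP0u₁ : dist (P 0) u₁ ≥ (m:ℝ)*M - 17*M - 3*δ := by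
    have t1 := dist_triangle (P 0) u₁ (P m)
    have t2 := dist_triangle u₁ w' (P m)
    have c1 := dist_comm u₁ (P m)
    have c2 := dist_comm w' (P m)
    have c3 := dist_comm w' u₁
    linarith [hPm0, hPmw', hwu₁]
  have hex2 : δ < gp u₁ (P 0) (S 0) := by
    have e2 : dist (S 0) u₁ ≥ (m:ℝ)*M - 17*M - 3*δ - r := by
      have t := dist_triangle (P 0) (S 0) u₁
      linarith [hr0, hP0u₁]
    unfold gp
    have hc2 := dist_comm (P 0) (S 0)
    linarith [hr0, hP0u₁, e2]
  have hcut2 : gp u₁ (S 0) (S (2*m)) ≤ δ := by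
    rcases min_le_iff.mp hmin2 with hc | hc
    · linarith
    · exact hc
  -- project to the S-geodesic
  obtain ⟨γ, hγ⟩ := hgeo (S 0) (S (2*m))
  have hnear2 := near_geodesic hhyp hγ u₁
  set t₁ := gp (S 0) u₁ (S (2*m)) with ht₁def
  have hu₁γ : dist u₁ (γ t₁) ≤ 3*δ := by
    have h := hnear2
    have hcomm : gp u₁ (S 0) (S (2*m)) = gp u₁ (S 0) (S (2*m)) := rfl
    linarith [hcut2]
  obtain ⟨i, hi, hid⟩ := morse4a hhyp hgeo hδ hδM hM0 hSlow hSgap hγ t₁ (gp_mem_Icc _ _ _)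
  refine ⟨i, hi, ?_⟩
  have tfin : dist (P m) (S i) ≤ dist (P m) w' + dist w' u₁ + dist u₁ (γ t₁) + dist (γ t₁) (S i) := by
    linarith [dist_triangle (P m) w' (S i), dist_triangle w' u₁ (S i),
      dist_triangle u₁ (γ t₁) (S i)]
  have : dist (P m) (S i) ≤ 17*M + 3*δ + 3*δ + 3*M := by
    linarith [hPmw', hwu₁, hu₁γ, hid]
  linarith [hδM]

end StmtAux
namespace StmtAux

lemma flip_comm {G : Type*} [Group G] {g h : G} (hg : g * h * g⁻¹ = h⁻¹) :
    h * (g*g) = (g*g) * h := by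
  have e1 : g * h = h⁻¹ * g := by
    calc g * h = (g * h * g⁻¹) * g := by group
      _ = h⁻¹ * g := by rw [hg]
  have e2 : g * h⁻¹ = h * g := by
    have h1 : (g * h * g⁻¹)⁻¹ = h := by rw [hg]; group
    calc g * h⁻¹ = (g * h * g⁻¹)⁻¹ * g := by group
      _ = h * g := by rw [h1]
  calc h * (g*g) = (h * g) * g := by group
    _ = (g * h⁻¹) * g := by rw [e2]
    _ = g * (h⁻¹ * g) := by group
    _ = g * (g * h) := by rw [← e1]
    _ = (g*g) * h := by group

lemma flip_inv_conj {G : Type*} [Group G] {g h : G} (hg : g * h * g⁻¹ = h⁻¹) :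
    g⁻¹ * h * g = h⁻¹ := by
  have e2 : g * h⁻¹ = h * g := by
    have h1 : (g * h * g⁻¹)⁻¹ = h := by rw [hg]; group
    calc g * h⁻¹ = (g * h * g⁻¹)⁻¹ * g := by group
      _ = h * g := by rw [h1]
  calc g⁻¹ * h * g = g⁻¹ * (h * g) := by group
    _ = g⁻¹ * (g * h⁻¹) := by rw [← e2]
    _ = h⁻¹ := by group

end StmtAux


open StmtAux

/-- Let `G` act properly cocompactly by isometries on a proper geodesic `δ`-hyperbolic
space `X`, and assume the small centralizers hypothesis (`G` is non-elementary and every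
elementary subgroup of `G` is cyclic). Then a hyperbolic element `h` of `G` (one with
positive asymptotic translation length) is not conjugate to its inverse. -/
theorem stmt_13 {G X : Type*} [Group G] [MetricSpace X] [ProperSpace X]
    [MulAction G X] (δ : ℝ) (hδ : 0 ≤ δ)
    (hhyp : GromovHyperbolic X δ) (hgeo : GeodesicSpace X)
    (hisom : ∀ g : G, Isometry (fun x : X => g • x))
    (hproper : ∀ K : Set X, IsCompact K → {g : G | (g • K ∩ K).Nonempty}.Finite)
    (hcocompact : ∃ K : Set X, IsCompact K ∧ ⋃ g : G, g • K = Set.univ)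
    (hne : ¬ IsVirtuallyCyclic G)
    (hsc : ∀ E : Subgroup G, IsVirtuallyCyclic E → IsCyclic E)
    (h : G)
    (hhyper : ∃ (x : X) (L : ℝ), 0 < L ∧
      Tendsto (fun n : ℕ => dist ((h ^ n) • x) x / n) atTop (nhds L)) :
    ∀ g : G, g * h * g⁻¹ ≠ h⁻¹ := by
  intro g hg
  obtain ⟨x, L, hL, hlim⟩ := hhyper
  have hiso : ∀ (u : G) (y z : X), dist (u • y) (u • z) = dist y z :=
    fun u y z => (hisom u).dist_eq y z
  set a : ℕ → ℝ := fun k => dist ((h ^ k) • x) x with ha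
  have ha0 : ∀ k, 0 ≤ a k := fun k => dist_nonneg
  have hsub : ∀ k l : ℕ, a (k + l) ≤ a k + a l := by
    intro k l
    have e : (h ^ (k + l)) • x = (h ^ k) • ((h ^ l) • x) := by
      rw [pow_add, mul_smul]
    calc a (k+l) = dist ((h ^ k) • ((h ^ l) • x)) x := by rw [ha]; simp only []; rw [e]
      _ ≤ dist ((h^k) • ((h^l) • x)) ((h^k) • x) + dist ((h^k) • x) x := dist_triangle _ _ _
      _ = a l + a k := by rw [hiso]
      _ = a k + a l := by ring
  have hmulk : ∀ Nn k : ℕ, a (Nn * k) ≤ k * a Nn := by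
    intro Nn k
    induction k with
    | zero => simp [ha]
    | succ k IH =>
      have e : Nn * (k+1) = Nn * k + Nn := by ring
      rw [e]
      calc a (Nn*k + Nn) ≤ a (Nn*k) + a Nn := hsub _ _
        _ ≤ k * a Nn + a Nn := by linarith
        _ = ((k+1 : ℕ) : ℝ) * a Nn := by push_cast; ring
  have halow : ∀ Nn : ℕ, (Nn:ℝ) * L ≤ a Nn := by
    intro Nn
    rcases Nat.eq_zero_or_pos Nn with h0 | hpos
    · subst h0; simp [ha]
    · have hcomp : Tendsto (fun k : ℕ => Nn * k) atTop atTop := by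
        apply Filter.tendsto_atTop_atTop.mpr
        intro b
        exact ⟨b, fun c hc => le_trans hc (Nat.le_mul_of_pos_left c hpos)⟩
      have hlim2 : Tendsto (fun k : ℕ => a (Nn * k) / ((Nn * k : ℕ):ℝ)) atTop (nhds L) :=
        hlim.comp hcomp
      have hub : ∀ᶠ k : ℕ in atTop, a (Nn*k) / ((Nn*k : ℕ):ℝ) ≤ a Nn / Nn := by
        filter_upwards [eventually_ge_atTop 1] with k hk
        have h1 := hmulk Nn k
        have hNk : (0:ℝ) < ((Nn*k : ℕ):ℝ) := by
          exact_mod_cast Nat.mul_pos hpos hk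
        have hNn : (0:ℝ) < (Nn:ℝ) := by exact_mod_cast hpos
        rw [div_le_div_iff₀ hNk hNn]
        push_cast
        push_cast at h1
        nlinarith [ha0 Nn, (show (0:ℝ) ≤ (Nn:ℝ) by positivity)]
      have hle : L ≤ a Nn / Nn := le_of_tendsto hlim2 hub
      have hNn : (0:ℝ) < (Nn:ℝ) := by exact_mod_cast hpos
      rw [le_div_iff₀ hNn] at hle
      linarith
  -- choose the power N
  have hev1 : ∀ᶠ Nn : ℕ in atTop, dist ((h ^ Nn) • x) x / Nn < 2*L :=
    hlim.eventually_lt_const (by linarith)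
  have hev2 : ∀ᶠ Nn : ℕ in atTop, 100*(δ+1) ≤ (Nn:ℝ) * L := by
    have ht : Tendsto (fun Nn : ℕ => (Nn:ℝ) * L) atTop atTop :=
      tendsto_natCast_atTop_atTop.atTop_mul_const hL
    exact ht.eventually_ge_atTop _
  obtain ⟨N, hN1, hNa, hNb⟩ :
      ∃ N : ℕ, 1 ≤ N ∧ dist ((h ^ N) • x) x / N < 2*L ∧ 100*(δ+1) ≤ (N:ℝ)*L :=
    ((eventually_ge_atTop 1).and (hev1.and hev2)).exists.imp
      (fun N hN => ⟨hN.1, hN.2.1, hN.2.2⟩)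
  set M := (N:ℝ) * L with hM
  have hNpos : (0:ℝ) < (N:ℝ) := by exact_mod_cast hN1
  have hM0 : 0 < M := mul_pos hNpos hL
  have hδM : 100 * δ ≤ M := by linarith
  have haN : a N ≤ 2*M := by
    rw [div_lt_iff₀ hNpos] at hNa
    rw [hM]
    calc a N ≤ 2*L*N := le_of_lt hNa
      _ = 2*((N:ℝ)*L) := by ring
  -- ℤ-power displacement function
  have hinvdist : ∀ u : G, dist (u⁻¹ • x) x = dist (u • x) x := by
    intro u
    calc dist (u⁻¹ • x) x = dist (u • (u⁻¹ • x)) (u • x) := (hiso u _ _).symm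
      _ = dist x (u • x) := by rw [smul_inv_smul]
      _ = dist (u • x) x := dist_comm _ _
  set AZ : ℤ → ℝ := fun w => dist ((h ^ w) • x) x with hAZ
  have hAZnat : ∀ k : ℕ, AZ (k:ℤ) = a k := by
    intro k
    simp only [hAZ, ha, zpow_natCast]
  have hAZneg : ∀ w : ℤ, AZ (-w) = AZ w := by
    intro w
    simp only [hAZ]
    rw [zpow_neg, hinvdist]
  have hAZlow : ∀ w : ℤ, M * |(w:ℝ)| ≤ AZ ((N:ℤ) * w) := by
    have hnn : ∀ k : ℕ, M * (k:ℝ) ≤ AZ ((N:ℤ) * (k:ℤ)) := by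
      intro k
      have e : ((N:ℤ) * (k:ℤ)) = ((N*k : ℕ) : ℤ) := by push_cast; ring
      rw [e, hAZnat]
      have := halow (N*k)
      calc M * (k:ℝ) = ((N*k : ℕ):ℝ) * L := by rw [hM]; push_cast; ring
        _ ≤ a (N*k) := halow (N*k)
    intro w
    rcases le_total 0 w with hw | hw
    · obtain ⟨k, rfl⟩ := Int.eq_ofNat_of_zero_le hw
      have := hnn k
      rw [abs_of_nonneg (by exact_mod_cast hw : (0:ℝ) ≤ ((k:ℤ):ℝ))]
      push_cast at this ⊢
      linarith
    · obtain ⟨k, hk⟩ := Int.eq_ofNat_of_zero_le (neg_nonneg.mpr hw)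
      have e1 : AZ ((N:ℤ)*w) = AZ ((N:ℤ)*(k:ℤ)) := by
        rw [← hAZneg ((N:ℤ)*w)]
        congr 1
        rw [← hk]; ring
      rw [e1]
      have := hnn k
      have e2 : |(w:ℝ)| = ((k:ℕ):ℝ) := by
        rw [abs_of_nonpos (by exact_mod_cast hw : ((w:ℤ):ℝ) ≤ 0)]
        have : ((-w : ℤ):ℝ) = ((k:ℤ):ℝ) := by exact_mod_cast congrArg (fun z : ℤ => (z:ℝ)) hk
        push_cast at this ⊢
        linarith
      rw [e2]
      exact this
  have hAZgap : ∀ w : ℤ, w = 1 ∨ w = -1 → AZ ((N:ℤ) * w) ≤ 2*M := by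
    intro w hw
    rcases hw with rfl | rfl
    · rw [mul_one]
      have : AZ ((N:ℕ):ℤ) = a N := hAZnat N
      rw [this]; exact haN
    · have : (N:ℤ) * (-1) = -((N:ℕ):ℤ) := by ring
      rw [this, hAZneg, hAZnat]
      exact haN
  -- the commuting element
  set c := g * g with hc
  have hcomm : h * c = c * h := flip_comm hg
  have hCom : Commute h c := hcomm
  -- step: every power of c is 21M-close to the h-orbit of x
  have hrelstep : ∀ j : ℕ, ∃ z : ℤ, dist ((c ^ j) • x) ((h ^ z) • x) ≤ 21 * M := by
    intro j
    set p := (c ^ j) • x with hp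
    set r := dist p x with hr
    have hrnn : 0 ≤ r := dist_nonneg
    set m : ℕ := Nat.ceil ((r + 18*M + 5*δ)/M) with hm
    have hmM : r + 18*M + 5*δ ≤ (m:ℝ) * M := by
      have h1 : (r + 18*M + 5*δ)/M ≤ (m:ℝ) := Nat.le_ceil _
      rw [div_le_iff₀ hM0] at h1
      linarith
    set S : ℕ → X := fun i => (h ^ ((N:ℤ) * ((i:ℤ) - (m:ℤ)))) • x with hS
    set P : ℕ → X := fun i => (h ^ ((N:ℤ) * ((i:ℤ) - (m:ℤ)))) • p with hP
    have hPbase : ∀ w : ℤ, dist ((h ^ w) • p) p = AZ w := by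
      intro w
      have hcw : (h ^ w) * (c ^ j) = (c ^ j) * (h ^ w) := ((hCom.pow_right j).zpow_left w).eq
      simp only [hAZ, hp]
      rw [← mul_smul, hcw, mul_smul, hiso]
    have hSd : ∀ i i' : ℕ, dist (S i) (S i') = AZ ((N:ℤ)*((i:ℤ) - (i':ℤ))) := by
      intro i i'
      have e : (h ^ ((N:ℤ)*((i:ℤ)-(m:ℤ)))) • x
          = (h ^ ((N:ℤ)*((i':ℤ)-(m:ℤ)))) • ((h ^ ((N:ℤ)*((i:ℤ)-(i':ℤ)))) • x) := by
        rw [← mul_smul, ← zpow_add]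
        congr 2
        ring
      simp only [hS, hAZ]
      rw [e, hiso]
    have hPdd : ∀ i i' : ℕ, dist (P i) (P i') = AZ ((N:ℤ)*((i:ℤ) - (i':ℤ))) := by
      intro i i'
      have e : (h ^ ((N:ℤ)*((i:ℤ)-(m:ℤ)))) • p
          = (h ^ ((N:ℤ)*((i':ℤ)-(m:ℤ)))) • ((h ^ ((N:ℤ)*((i:ℤ)-(i':ℤ)))) • p) := by
        rw [← mul_smul (h ^ ((N:ℤ)*((i':ℤ)-(m:ℤ)))) (h ^ ((N:ℤ)*((i:ℤ)-(i':ℤ)))) p,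
          ← zpow_add]
        congr 2
        ring
      simp only [hP]
      rw [e, hiso]
      exact hPbase _
    have hcast : ∀ i i' : ℕ, |(((i:ℤ) - (i':ℤ) : ℤ) : ℝ)| = |(i:ℝ) - (i':ℝ)| := by
      intro i i'
      push_cast
      ring_nf
    have hSlow : ∀ i ≤ 2*m, ∀ i' ≤ 2*m, M * |(i:ℝ) - (i':ℝ)| ≤ dist (S i) (S i') := by
      intro i _ i' _
      rw [hSd i i', ← hcast i i']
      exact hAZlow _
    have hPlow : ∀ i ≤ 2*m, ∀ i' ≤ 2*m, M * |(i:ℝ) - (i':ℝ)| ≤ dist (P i) (P i') := by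
      intro i _ i' _
      rw [hPdd i i', ← hcast i i']
      exact hAZlow _
    have hSgap : ∀ i < 2*m, dist (S i) (S (i+1)) ≤ 2*M := by
      intro i _
      rw [hSd i (i+1)]
      have e : (N:ℤ)*((i:ℤ) - ((i+1:ℕ):ℤ)) = (N:ℤ) * (-1) := by push_cast; ring
      rw [e]
      exact hAZgap (-1) (Or.inr rfl)
    have hPgap : ∀ i < 2*m, dist (P i) (P (i+1)) ≤ 2*M := by
      intro i _
      rw [hPdd i (i+1)]
      have e : (N:ℤ)*((i:ℤ) - ((i+1:ℕ):ℤ)) = (N:ℤ) * (-1) := by push_cast; ring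
      rw [e]
      exact hAZgap (-1) (Or.inr rfl)
    have hr0' : dist (P 0) (S 0) ≤ r := by
      simp only [hP, hS]
      rw [hiso, ← hr]
    have hr2' : dist (P (2*m)) (S (2*m)) ≤ r := by
      simp only [hP, hS]
      rw [hiso, ← hr]
    obtain ⟨i, hi2m, hdist⟩ := lemmaM hhyp hgeo hδ hδM hM0 hSlow hSgap hPlow hPgap
      hr0' hr2' hmM
    have hPm : P m = p := by
      simp only [hP]
      have e : (N:ℤ)*(((m:ℕ):ℤ) - (m:ℤ)) = 0 := by ring
      rw [e, zpow_zero, one_smul]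
    refine ⟨(N:ℤ) * ((i:ℤ) - (m:ℤ)), ?_⟩
    rw [hPm] at hdist
    simpa only [hS] using hdist
  -- pigeonhole via properness
  choose zf hzf using hrelstep
  have hB0 : (0:ℝ) ≤ 21*M := by linarith
  set K := Metric.closedBall x (21*M) with hK
  have hKc : IsCompact K := isCompact_closedBall x _
  set U : ℕ → G := fun j => (h ^ (zf j))⁻¹ * c ^ j with hU
  have hUdist : ∀ j, dist (U j • x) x ≤ 21*M := by
    intro j
    have e : (h ^ (zf j)) • ((U j) • x) = (c ^ j) • x := by
      rw [← mul_smul, hU]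
      simp only []
      rw [mul_inv_cancel_left]
    calc dist (U j • x) x = dist ((h ^ (zf j)) • (U j • x)) ((h ^ (zf j)) • x) :=
          (hiso _ _ _).symm
      _ = dist ((c ^ j) • x) ((h ^ (zf j)) • x) := by rw [e]
      _ ≤ 21*M := hzf j
  have hUT : ∀ j, U j ∈ {u : G | (u • K ∩ K).Nonempty} := by
    intro j
    refine ⟨U j • x, ?_, ?_⟩
    · exact Set.smul_mem_smul_set (Metric.mem_closedBall.mpr (by simpa using hB0))
    · exact Metric.mem_closedBall.mpr (by simpa [dist_comm] using hUdist j)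
  obtain ⟨j, -, j', -, hjj', hUeq⟩ :=
    Set.infinite_univ.exists_ne_map_eq_of_mapsTo
      (fun j _ => hUT j) (hproper K hKc)
  -- extract the relation c^k = h^t
  have hrel : ∃ (k : ℕ) (t : ℤ), 1 ≤ k ∧ c ^ k = h ^ t := by
    rcases Nat.lt_or_ge j j' with hlt | hge
    · refine ⟨j' - j, zf j' - zf j, by omega, ?_⟩
      have e1 : c ^ j' = c ^ (j' - j) * c ^ j := by
        rw [← pow_add]
        congr 1
        omega
      have e2 : (h ^ (zf j))⁻¹ * c ^ j = (h ^ (zf j'))⁻¹ * c ^ j' := hUeq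
      calc c ^ (j' - j) = (h ^ (zf j')) * ((h ^ (zf j'))⁻¹ * c ^ j') * (c ^ j)⁻¹ := by
            rw [e1]; group
        _ = (h ^ (zf j')) * ((h ^ (zf j))⁻¹ * c ^ j) * (c ^ j)⁻¹ := by rw [e2]
        _ = (h ^ (zf j')) * (h ^ (zf j))⁻¹ := by group
        _ = h ^ (zf j' - zf j) := by rw [zpow_sub]
    · have hlt : j' < j := by omega
      refine ⟨j - j', zf j - zf j', by omega, ?_⟩
      have e1 : c ^ j = c ^ (j - j') * c ^ j' := by
        rw [← pow_add]
        congr 1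
        omega
      have e2 : (h ^ (zf j))⁻¹ * c ^ j = (h ^ (zf j'))⁻¹ * c ^ j' := hUeq
      calc c ^ (j - j') = (h ^ (zf j)) * ((h ^ (zf j))⁻¹ * c ^ j) * (c ^ j')⁻¹ := by
            rw [e1]; group
        _ = (h ^ (zf j)) * ((h ^ (zf j'))⁻¹ * c ^ j') * (c ^ j')⁻¹ := by rw [e2]
        _ = (h ^ (zf j)) * (h ^ (zf j'))⁻¹ := by group
        _ = h ^ (zf j - zf j') := by rw [zpow_sub]
  obtain ⟨k, t, hk1, hrel⟩ := hrel
  -- group-theoretic conclusion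
  set E := Subgroup.closure ({h, g} : Set G) with hE
  have hhE : h ∈ E := Subgroup.subset_closure (by simp)
  have hgE : g ∈ E := Subgroup.subset_closure (by simp)
  have hnorm : E ≤ Subgroup.normalizer (Subgroup.zpowers h : Set G) := by
    rw [hE]
    refine (Subgroup.closure_le _).mpr ?_
    intro u hu
    rcases Set.mem_insert_iff.mp hu with rfl | hu2
    · -- u = h
      refine Subgroup.mem_normalizer_iff.mpr ?_
      intro v
      constructor
      · intro hv
        obtain ⟨z, hz⟩ := Subgroup.mem_zpowers_iff.mp hv
        refine Subgroup.mem_zpowers_iff.mpr ⟨z, ?_⟩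
        rw [← hz]
        group
      · intro hv
        obtain ⟨z, hz⟩ := Subgroup.mem_zpowers_iff.mp hv
        have hv' : v = u⁻¹ * (u * v * u⁻¹) * u := by group
        refine Subgroup.mem_zpowers_iff.mpr ⟨z, ?_⟩
        rw [hv', ← hz]
        group
    · -- u = g
      have hu3 : u = g := by simpa using hu2
      subst hu3
      refine Subgroup.mem_normalizer_iff.mpr ?_
      intro v
      constructor
      · intro hv
        obtain ⟨z, hz⟩ := Subgroup.mem_zpowers_iff.mp hv
        refine Subgroup.mem_zpowers_iff.mpr ⟨-z, ?_⟩
        rw [← hz]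
        calc h ^ (-z) = (h⁻¹) ^ z := by group
          _ = (u * h * u⁻¹) ^ z := by rw [hg]
          _ = u * h ^ z * u⁻¹ := conj_zpow
      · intro hv
        obtain ⟨z, hz⟩ := Subgroup.mem_zpowers_iff.mp hv
        refine Subgroup.mem_zpowers_iff.mpr ⟨-z, ?_⟩
        have hv' : v = u⁻¹ * (u * v * u⁻¹) * u := by group
        rw [hv', ← hz]
        calc h ^ (-z) = (h⁻¹) ^ z := by group
          _ = (u⁻¹ * h * u) ^ z := by rw [flip_inv_conj hg]
          _ = u⁻¹ * h ^ z * u := by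
              have hcz := conj_zpow (i := z) (a := u⁻¹) (b := h)
              rw [inv_inv] at hcz
              rw [hcz]
  set Nsub := (Subgroup.zpowers h).subgroupOf E with hNsub
  have hNnormal : Nsub.Normal := by
    constructor
    intro nn hn ee
    rw [Subgroup.mem_subgroupOf] at hn ⊢
    have hnorm' := Subgroup.mem_normalizer_iff.mp (hnorm ee.2) (nn : G)
    have hmem : (ee : G) * (nn : G) * (ee : G)⁻¹ ∈ Subgroup.zpowers h := hnorm'.mp hn
    simpa using hmem
  haveI := hNnormal
  set q : E ⧸ Nsub := QuotientGroup.mk ⟨g, hgE⟩ with hq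
  have key : ∀ u (hu : u ∈ Subgroup.closure ({h, g} : Set G)),
      ∃ z : ℤ, (QuotientGroup.mk ⟨u, hu⟩ : E ⧸ Nsub) = q ^ z := by
    intro u hu
    induction hu using Subgroup.closure_induction with
    | mem v hv =>
      rcases Set.mem_insert_iff.mp hv with rfl | hv2
      · refine ⟨0, ?_⟩
        rw [zpow_zero]
        refine (QuotientGroup.eq_one_iff _).mpr ?_
        exact Subgroup.mem_subgroupOf.mpr (Subgroup.mem_zpowers v)
      · have hv3 : v = g := by simpa using hv2
        subst hv3
        exact ⟨1, by rw [zpow_one, hq]⟩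
    | one =>
      refine ⟨0, ?_⟩
      rw [zpow_zero]
      refine (QuotientGroup.eq_one_iff _).mpr ?_
      exact Subgroup.mem_subgroupOf.mpr (Subgroup.zpowers h).one_mem
    | mul v w hv hw ihv ihw =>
      obtain ⟨z1, hz1⟩ := ihv
      obtain ⟨z2, hz2⟩ := ihw
      refine ⟨z1 + z2, ?_⟩
      have e : (⟨v * w, mul_mem hv hw⟩ : E) = ⟨v, hv⟩ * ⟨w, hw⟩ := rfl
      rw [e, QuotientGroup.mk_mul, hz1, hz2, zpow_add]
    | inv v hv ihv =>
      obtain ⟨z1, hz1⟩ := ihv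
      refine ⟨-z1, ?_⟩
      have e : (⟨v⁻¹, inv_mem hv⟩ : E) = (⟨v, hv⟩ : E)⁻¹ := rfl
      rw [e, QuotientGroup.mk_inv, hz1, zpow_neg]
  have hg2k : g ^ (2*k) = h ^ t := by
    have e2 : c ^ k = g ^ (2*k) := by
      simp only [hc]
      rw [← pow_two, ← pow_mul]
    rw [← e2, hrel]
  have hqord : q ^ (2*k) = (1 : E ⧸ Nsub) := by
    have e : (⟨g, hgE⟩ : E) ^ (2*k) = ⟨g ^ (2*k), pow_mem hgE _⟩ := by
      apply Subtype.ext
      push_cast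
      rfl
    rw [hq, ← QuotientGroup.mk_pow, e]
    refine (QuotientGroup.eq_one_iff _).mpr ?_
    refine Subgroup.mem_subgroupOf.mpr ?_
    show g ^ (2*k) ∈ Subgroup.zpowers h
    rw [hg2k]
    exact zpow_mem (Subgroup.mem_zpowers h) t
  haveI hQfin : Finite (E ⧸ Nsub) := by
    have hfino : IsOfFinOrder q :=
      isOfFinOrder_iff_pow_eq_one.mpr ⟨2*k, by omega, hqord⟩
    have h1 : (Subgroup.zpowers q : Set (E ⧸ Nsub)).Finite := hfino.finite_zpowers
    have h2 : (Set.univ : Set (E ⧸ Nsub)) ⊆ (Subgroup.zpowers q : Set (E ⧸ Nsub)) := by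
      intro y _
      obtain ⟨⟨u, huE⟩, rfl⟩ := QuotientGroup.mk_surjective y
      obtain ⟨z, hz⟩ := key u huE
      rw [hz]
      exact Subgroup.mem_zpowers_iff.mpr ⟨z, rfl⟩
    exact Set.finite_univ_iff.mp (h1.subset h2)
  haveI hNfi : Nsub.FiniteIndex := Nsub.finiteIndex_of_finite_quotient
  have hNcyc : IsCyclic Nsub := by
    refine ⟨⟨⟨⟨h, hhE⟩, Subgroup.mem_subgroupOf.mpr (Subgroup.mem_zpowers h)⟩, ?_⟩⟩
    rintro ⟨⟨u, huE⟩, hmem⟩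
    have hu : u ∈ Subgroup.zpowers h := Subgroup.mem_subgroupOf.mp hmem
    obtain ⟨z, hz⟩ := Subgroup.mem_zpowers_iff.mp hu
    refine Subgroup.mem_zpowers_iff.mpr ⟨z, ?_⟩
    apply Subtype.ext
    apply Subtype.ext
    show (((⟨⟨h, hhE⟩, _⟩ : Nsub) ^ z : Nsub) : E).val = u
    rw [← hz]
    norm_cast
  have hEVC : IsVirtuallyCyclic E := ⟨Nsub, hNcyc, hNfi⟩
  have hEcyc := hsc E hEVC
  obtain ⟨gen, hgen⟩ := hEcyc.exists_generator
  obtain ⟨z1, hz1⟩ := Subgroup.mem_zpowers_iff.mp (hgen ⟨h, hhE⟩)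
  obtain ⟨z2, hz2⟩ := Subgroup.mem_zpowers_iff.mp (hgen ⟨g, hgE⟩)
  have hcomm2 : h * g = g * h := by
    have e : (⟨h, hhE⟩ : E) * ⟨g, hgE⟩ = ⟨g, hgE⟩ * ⟨h, hhE⟩ := by
      rw [← hz1, ← hz2, ← zpow_add, ← zpow_add, add_comm]
    exact congrArg Subtype.val e
  have hinvh : h⁻¹ = h := by
    rw [← hg, ← hcomm2]
    group
  have hh2 : h ^ 2 = 1 := by
    rw [pow_two]
    nth_rewrite 2 [← hinvh]
    exact mul_inv_cancel h
  have h2L := halow 2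
  have ha2 : a 2 = 0 := by
    simp only [ha]
    rw [hh2, one_smul, dist_self]
  rw [ha2] at h2L
  norm_num at h2L
  linarith
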